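/- Let X be a convex subset of a normed space and P, A nonempty disjoint subsets of X such that for every x ∈ X the distances d(x,P) and d(x,A) are attained, and no segment [p,a] with p ∈ P, a ∈ A is parallel to a nondegenerate segment contained in the unit sphere. Then the boundary of dom(P,A) relative to X equals the bisector {x ∈ X : d(x,P) = d(x,A)}, and the interior of dom(P,A) relative to X equals {x ∈ X : d(x,P) < d(x,A)}. -/

import Mathlib

open Metric

-- helper: normalized of positive scalar multiple
lemma normalize_smul {E : Type*} [NormedAddCommGroup E] [NormedSpace ℝ E]
    {c : ℝ} (hc : 0 < c) (v : E) : ‖c • v‖⁻¹ • (c • v) = ‖v‖⁻¹ • v := by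
  rcases eq_or_ne v 0 with rfl | hv
  · simp
  · rw [norm_smul, Real.norm_eq_abs, abs_of_pos hc, smul_smul, mul_inv]
    congr 1
    field_simp

-- segment on sphere lemma
lemma seg_on_sphere {E : Type*} [NormedAddCommGroup E] [NormedSpace ℝ E]
    {u w : E} (hu : ‖u‖ = 1) (hw : ‖w‖ = 1) {t : ℝ} (ht0 : 0 < t) (ht1 : t < 1)
    (hzt : ‖t • u + (1 - t) • w‖ = 1) :
    segment ℝ w (t • u + (1 - t) • w) ⊆ Metric.sphere (0 : E) 1 := by
  -- subclaim: for 0 ≤ s ≤ t, ‖s•u+(1-s)•w‖ = 1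
  have sub : ∀ s : ℝ, 0 ≤ s → s ≤ t → ‖s • u + (1 - s) • w‖ = 1 := by
    intro s hs0 hst
    have hs1 : s < 1 := lt_of_le_of_lt hst ht1
    have hle : ‖s • u + (1 - s) • w‖ ≤ 1 := by
      calc ‖s • u + (1 - s) • w‖ ≤ ‖s • u‖ + ‖(1 - s) • w‖ := norm_add_le _ _
        _ = s + (1 - s) := by
            rw [norm_smul, norm_smul, Real.norm_eq_abs, Real.norm_eq_abs,
              abs_of_nonneg hs0, abs_of_nonneg (by linarith), hu, hw]; ring
        _ = 1 := by ring
    have hid : (1 - s) • (t • u + (1 - s) • w) = (1-s) • (t•u) + (1-s)•((1-s)•w) := by module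
    have hid2 : (1 - s) • (t • u + (1 - t) • w)
        = (1 - t) • (s • u + (1 - s) • w) + (t - s) • u := by module
    have hge : 1 ≤ ‖s • u + (1 - s) • w‖ := by
      have h1 : ‖(1 - s) • (t • u + (1 - t) • w)‖ = 1 - s := by
        rw [norm_smul, Real.norm_eq_abs, abs_of_nonneg (by linarith), hzt, mul_one]
      have h2 : ‖(1 - t) • (s • u + (1 - s) • w) + (t - s) • u‖
          ≤ (1 - t) * ‖s • u + (1 - s) • w‖ + (t - s) := by
        calc _ ≤ ‖(1 - t) • (s • u + (1 - s) • w)‖ + ‖(t - s) • u‖ := norm_add_le _ _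
          _ = (1 - t) * ‖s • u + (1 - s) • w‖ + (t - s) := by
              rw [norm_smul, norm_smul, Real.norm_eq_abs, Real.norm_eq_abs,
                abs_of_nonneg (by linarith : (0:ℝ) ≤ 1 - t),
                abs_of_nonneg (by linarith : (0:ℝ) ≤ t - s), hu, mul_one]
      rw [hid2] at h1
      rw [h1] at h2
      nlinarith
    linarith
  rintro z ⟨c, d, hc, hd, hcd, rfl⟩
  have : c • w + d • (t • u + (1 - t) • w) = (d * t) • u + (1 - d * t) • w := by
    have : c = 1 - d := by linarith
    subst this; module
  rw [Metric.mem_sphere, dist_zero_right, this]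
  exact sub (d * t) (mul_nonneg hd ht0.le)
    (by nlinarith)

lemma key_step {E : Type*} [NormedAddCommGroup E] [NormedSpace ℝ E]
    (X P A : Set E) (hX : Convex ℝ X) (hAX : A ⊆ X)
    (hdisj : P ∩ A = ∅)
    (hattP : ∀ x ∈ X, ∃ p ∈ P, Metric.infDist x P = dist x p)
    (hpar : ∀ p ∈ P, ∀ a ∈ A, p ≠ a →
      ¬ ∃ u v : E, u ≠ v ∧ segment ℝ u v ⊆ Metric.sphere (0 : E) 1 ∧
        (‖a - p‖⁻¹ • (a - p) = ‖v - u‖⁻¹ • (v - u) ∨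
         ‖a - p‖⁻¹ • (a - p) = -(‖v - u‖⁻¹ • (v - u))))
    {x : E} (hx : x ∈ X) {a : E} (ha : a ∈ A) {r : ℝ}
    (hrP : Metric.infDist x P = r) (hra : dist x a = r) (hr : 0 < r)
    {t : ℝ} (ht0 : 0 < t) (ht1 : t < 1) :
    Metric.infDist ((1-t) • x + t • a) A < Metric.infDist ((1-t) • x + t • a) P := by
  set y : E := (1-t) • x + t • a with hy
  have h1t : (0:ℝ) < 1 - t := by linarith
  have hyX : y ∈ X := hX hx (hAX ha) h1t.le ht0.le (by ring)
  have hya : dist y a = (1-t) * r := by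
    have : y - a = (1-t) • (x - a) := by rw [hy]; module
    rw [dist_eq_norm, this, norm_smul, Real.norm_eq_abs, abs_of_pos h1t,
      ← dist_eq_norm, hra]
  have hyA : Metric.infDist y A ≤ (1-t) * r := hya ▸ Metric.infDist_le_dist_of_mem ha
  by_contra hcon
  push_neg at hcon
  obtain ⟨p', hp', hyp'⟩ := hattP y hyX
  have h1 : dist y p' ≤ (1-t) * r := by rw [← hyp']; exact hcon.trans hyA
  have h2 : r ≤ dist x p' := by rw [← hrP]; exact Metric.infDist_le_dist_of_mem hp'
  have h3 : dist x y = t * r := by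
    have : x - y = t • (x - a) := by rw [hy]; module
    rw [dist_eq_norm, this, norm_smul, Real.norm_eq_abs, abs_of_pos ht0,
      ← dist_eq_norm, hra]
  have htri := dist_triangle x y p'
  have h4 : dist y p' = (1-t) * r := by linarith
  have h5 : dist x p' = r := by linarith
  set u : E := r⁻¹ • (x - a) with hu_def
  set w : E := ((1-t) * r)⁻¹ • (y - p') with hw_def
  clear_value u w
  have hxa : ‖x - a‖ = r := by rw [← dist_eq_norm, hra]
  have hypn : ‖y - p'‖ = (1-t) * r := by rw [← dist_eq_norm, h4]
  have hu : ‖u‖ = 1 := by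
    rw [hu_def, norm_smul, Real.norm_eq_abs, abs_of_pos (inv_pos.2 hr), hxa]
    field_simp
  have hw : ‖w‖ = 1 := by
    rw [hw_def, norm_smul, Real.norm_eq_abs,
      abs_of_pos (inv_pos.2 (mul_pos h1t hr)), hypn]
    field_simp
  have hxy : x - y = (t * r) • u := by
    rw [hu_def, smul_smul]
    have : t * r * r⁻¹ = t := by field_simp
    rw [this, hy]; module
  have hypw : y - p' = ((1-t) * r) • w := by
    rw [hw_def, smul_smul]
    have : (1-t) * r * ((1-t) * r)⁻¹ = 1 := by field_simp
    rw [this, one_smul]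
  have hid : t • u + (1-t) • w = r⁻¹ • (x - p') := by
    have e1 : r⁻¹ • (x - p') = r⁻¹ • (x - y) + r⁻¹ • (y - p') := by
      rw [← smul_add]; congr 1; abel
    rw [e1, hxy, hypw, smul_smul, smul_smul,
      show r⁻¹ * (t * r) = t by
        rw [mul_comm t r, ← mul_assoc, inv_mul_cancel₀ hr.ne', one_mul],
      show r⁻¹ * ((1-t) * r) = 1 - t by
        rw [mul_comm (1-t) r, ← mul_assoc, inv_mul_cancel₀ hr.ne', one_mul]]
  have hzt : ‖t • u + (1-t) • w‖ = 1 := by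
    rw [hid, norm_smul, Real.norm_eq_abs, abs_of_pos (inv_pos.2 hr),
      ← dist_eq_norm, h5]
    field_simp
  rcases eq_or_ne u w with heq | hne
  · -- u = w forces p' = a, contradicting disjointness
    have : y - p' = (1-t) • (x - a) := by
      rw [hypw, ← heq, hu_def, smul_smul]
      congr 1
      field_simp
    have hpa : p' = a := by
      have h6 : p' = y - (1-t) • (x - a) := by rw [← this]; abel
      rw [h6, hy]; module
    have : a ∈ P ∩ A := ⟨hpa ▸ hp', ha⟩
    rw [hdisj] at this
    exact this
  · -- u ≠ w : build forbidden segment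
    have hap : a - p' = ((1-t) * r) • (w - u) := by
      have e1 : a - p' = (a - y) + (y - p') := by abel
      have e2 : a - y = -(((1-t)*r) • u) := by
        rw [hu_def, smul_smul]
        have : (1-t) * r * r⁻¹ = 1 - t := by field_simp
        rw [this, hy]; module
      rw [e1, e2, hypw]; module
    have hwu : w - u ≠ 0 := sub_ne_zero.2 (Ne.symm hne)
    have hapne : a - p' ≠ 0 := by
      rw [hap]
      exact smul_ne_zero (by positivity) hwu
    have hp'a : p' ≠ a := fun h => hapne (by rw [h, sub_self])
    apply hpar p' hp' a ha hp'a
    refine ⟨w, t • u + (1-t) • w, ?_, seg_on_sphere hu hw ht0 ht1 hzt, Or.inr ?_⟩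
    · intro h
      apply hne
      have h2' : t • u = t • w := by
        have hz : t • u + (1 - t) • w - w = (0:E) := by rw [← h]; abel
        have e : t • u + (1 - t) • w - w = t • u - t • w := by module
        rw [e, sub_eq_zero] at hz
        exact hz
      exact smul_right_injective E ht0.ne' h2'
    · have e3 : t • u + (1-t) • w - w = t • (u - w) := by module
      rw [e3, hap, normalize_smul (mul_pos h1t hr), normalize_smul ht0,
        norm_sub_rev w u, show w - u = -(u - w) by abel, smul_neg]

theorem frontier_and_interior_of_dom
    {E : Type*} [NormedAddCommGroup E] [NormedSpace ℝ E]
    (X P A : Set E) (hX : Convex ℝ X) (hPX : P ⊆ X) (hAX : A ⊆ X)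
    (hP : P.Nonempty) (hA : A.Nonempty) (hdisj : P ∩ A = ∅)
    (hattP : ∀ x ∈ X, ∃ p ∈ P, Metric.infDist x P = dist x p)
    (hattA : ∀ x ∈ X, ∃ a ∈ A, Metric.infDist x A = dist x a)
    (hpar : ∀ p ∈ P, ∀ a ∈ A, p ≠ a →
      ¬ ∃ u v : E, u ≠ v ∧ segment ℝ u v ⊆ Metric.sphere (0 : E) 1 ∧
        (‖a - p‖⁻¹ • (a - p) = ‖v - u‖⁻¹ • (v - u) ∨
         ‖a - p‖⁻¹ • (a - p) = -(‖v - u‖⁻¹ • (v - u)))) :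
    frontier {x : X | Metric.infDist (x : E) P ≤ Metric.infDist (x : E) A} =
        {x : X | Metric.infDist (x : E) P = Metric.infDist (x : E) A} ∧
    interior {x : X | Metric.infDist (x : E) P ≤ Metric.infDist (x : E) A} =
        {x : X | Metric.infDist (x : E) P < Metric.infDist (x : E) A} := by
  have hfP : Continuous fun x : X => Metric.infDist (x : E) P :=
    (Metric.continuous_infDist_pt P).comp continuous_subtype_val
  have hfA : Continuous fun x : X => Metric.infDist (x : E) A :=
    (Metric.continuous_infDist_pt A).comp continuous_subtype_val
  set S : Set X := {x : X | Metric.infDist (x : E) P ≤ Metric.infDist (x : E) A} with hSdef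
  have hScl : IsClosed S := isClosed_le hfP hfA
  have hTop : IsOpen {x : X | Metric.infDist (x : E) P < Metric.infDist (x : E) A} :=
    isOpen_lt hfP hfA
  have hint : interior S = {x : X | Metric.infDist (x : E) P < Metric.infDist (x : E) A} := by
    apply Set.Subset.antisymm
    · intro x hx
      have hxS := (interior_subset hx : x ∈ S)
      simp only [hSdef, Set.mem_setOf_eq] at hxS
      rcases lt_or_eq_of_le hxS with h | h
      · exact h
      · exfalso
        obtain ⟨p, hp, hxp⟩ := hattP x x.2
        obtain ⟨a, ha, hxa⟩ := hattA x x.2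
        rcases eq_or_lt_of_le
          (Metric.infDist_nonneg : (0:ℝ) ≤ Metric.infDist (x : E) P) with hr | hr
        · -- distance 0 : x ∈ P ∩ A, contradiction
          have hxp0 : (x : E) = p := by
            rw [← dist_eq_zero, ← hxp]; exact hr.symm
          have hxa0 : (x : E) = a := by
            rw [← dist_eq_zero, ← hxa, ← h]; exact hr.symm
          have : (x : E) ∈ P ∩ A := ⟨hxp0 ▸ hp, hxa0 ▸ ha⟩
          rw [hdisj] at this
          exact this
        · -- r > 0 : x is a limit of points outside S
          have hra : dist (x : E) a = Metric.infDist (x : E) P := by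
            rw [← hxa, ← h]
          have hcl : x ∈ closure Sᶜ := by
            rw [mem_closure_iff_seq_limit]
            have ht0 : ∀ n : ℕ, (0:ℝ) < ((n:ℝ)+2)⁻¹ := fun n => by positivity
            have ht1 : ∀ n : ℕ, ((n:ℝ)+2)⁻¹ < 1 := fun n => by
              rw [inv_lt_one₀ (by positivity)]
              have : (0:ℝ) ≤ (n:ℝ) := Nat.cast_nonneg n
              linarith
            refine ⟨fun n => ⟨(1 - ((n:ℝ)+2)⁻¹) • (x : E) + ((n:ℝ)+2)⁻¹ • a,
              hX x.2 (hAX ha) (by linarith [ht1 n]) (ht0 n).le (by ring)⟩, ?_, ?_⟩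
            · intro n
              simp only [Set.mem_compl_iff, hSdef, Set.mem_setOf_eq, not_le]
              exact key_step X P A hX hAX hdisj hattP hpar x.2 ha rfl hra hr
                (ht0 n) (ht1 n)
            · rw [tendsto_subtype_rng]
              have htn : Filter.Tendsto (fun n : ℕ => ((n:ℝ)+2)⁻¹)
                  Filter.atTop (nhds 0) :=
                tendsto_inv_atTop_zero.comp
                  (Filter.tendsto_atTop_add_const_right _ 2 tendsto_natCast_atTop_atTop)
              have := ((htn.const_sub 1).smul_const (x : E)).add (htn.smul_const a)
              simpa using this
          rw [closure_compl] at hcl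
          exact hcl hx
    · rw [hTop.subset_interior_iff]
      intro x hx
      simp only [hSdef, Set.mem_setOf_eq]
      exact le_of_lt hx
  refine ⟨?_, hint⟩
  rw [hScl.frontier_eq, hint]
  ext x
  simp only [Set.mem_diff, hSdef, Set.mem_setOf_eq, not_lt]
  constructor
  · rintro ⟨h1, h2⟩
    exact le_antisymm h1 h2
  · intro h
    exact ⟨le_of_eq h, le_of_eq h.symm⟩
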